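/- arXiv:0806.0951 — 2 statements merged into one kernel-verified Lean document; each statement's English description precedes it below -/
import Mathlib

section
/- Let d > 0, p_S, p_G > 0, s_S, s_G, s_R ∈ ℝ, set p_R := (p_S + p_G)/p_G and assume s_R ≤ (p_S·s_S − p_G·s_G)/(p_S + p_G). For u ∈ B^{s_S}_{p_S} define the sequence g : Λ → ℝ by g_λ := p_R · 2^{p_R(s_R + d(1/2 − 1/p_R))·ℓ(λ)} · sign(u_λ)·|u_λ|^{p_R − 1} (the Gâteaux gradient of ‖·‖_{B^{s_R}_{p_R}}^{p_R} at u in wavelet coordinates). Then ‖g‖_{B^{s_G}_{p_G}}^{p_G} ≤ p_R^{p_G} · ‖u‖_{B^{s_S}_{p_S}}^{p_S}; in particular g ∈ B^{s_G}_{p_G}. -/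
open scoped ENNReal

/-- Besov sequence norm (wavelet characterization), valued in `ℝ≥0∞`. -/
noncomputable def besovNorm {Λ : Type*} (d : ℝ) (lev : Λ → ℕ) (s p : ℝ) (u : Λ → ℝ) : ℝ≥0∞ :=
  (∑' lam : Λ, ENNReal.ofReal
      ((2 : ℝ) ^ (p * (s + d * (1 / 2 - 1 / p)) * (lev lam : ℝ)) * |u lam| ^ p)) ^ (1 / p)

/-- Proposition 3.1: for `u ∈ B^{s_S}_{p_S}`, the Gâteaux gradient
`g_λ = p_R · 2^{p_R(s_R + d(1/2 − 1/p_R))·ℓ(λ)} · sign(u_λ)|u_λ|^{p_R−1}` of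
`‖·‖_{B^{s_R}_{p_R}}^{p_R}` at `u` satisfies `‖g‖_{B^{s_G}_{p_G}}^{p_G} ≤ p_R^{p_G}‖u‖_{B^{s_S}_{p_S}}^{p_S}`;
in particular `g ∈ B^{s_G}_{p_G}`. -/
theorem gradient_in_BG {Λ : Type*} [Countable Λ] (d : ℝ) (lev : Λ → ℕ)
    (pS pG sS sG sR : ℝ) (hd : 0 < d) (hpS : 0 < pS) (hpG : 0 < pG)
    (pR : ℝ) (hpR : pR = (pS + pG) / pG)
    (hsR : sR ≤ (pS * sS - pG * sG) / (pS + pG))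
    (u : Λ → ℝ) (hu : besovNorm d lev sS pS u ≠ ⊤)
    (g : Λ → ℝ)
    (hg : ∀ lam : Λ, g lam =
      pR * (2 : ℝ) ^ (pR * (sR + d * (1 / 2 - 1 / pR)) * (lev lam : ℝ)) *
        Real.sign (u lam) * |u lam| ^ (pR - 1)) :
    (besovNorm d lev sG pG g) ^ pG ≤
        ENNReal.ofReal (pR ^ pG) * (besovNorm d lev sS pS u) ^ pS ∧
      besovNorm d lev sG pG g ≠ ⊤ := by
  have hpSG : 0 < pS + pG := by linarith
  have hpR0 : 0 < pR := by rw [hpR]; positivity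
  have hpR1 : pR - 1 = pS / pG := by rw [hpR]; field_simp; ring
  have hcomp : (pR - 1) * pG = pS := by rw [hpR1]; field_simp
  set EG := pG * (sG + d * (1 / 2 - 1 / pG)) with hEG
  set AR := pR * (sR + d * (1 / 2 - 1 / pR)) with hAR
  set ES := pS * (sS + d * (1 / 2 - 1 / pS)) with hES
  have hkey : EG + AR * pG ≤ ES := by
    have h1 : pG * pR = pS + pG := by rw [hpR]; field_simp
    have h' : sR * (pS + pG) ≤ pS * sS - pG * sG := (le_div_iff₀ hpSG).mp hsR
    have e1 : EG = pG * sG + d * pG / 2 - d := by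
      rw [hEG]; field_simp; ring
    have e2 : AR * pG = (pS + pG) * sR + d * (pS + pG) / 2 - d * pG := by
      have : AR * pG = pR * pG * sR + d * (pR * pG) / 2 - d * pG := by
        rw [hAR]; field_simp; ring
      rw [this]; rw [mul_comm pR pG, h1]
    have e3 : ES = pS * sS + d * pS / 2 - d := by
      rw [hES]; field_simp; ring
    rw [e1, e2, e3]; nlinarith
  -- termwise real inequality
  have hterm : ∀ lam : Λ,
      (2 : ℝ) ^ (EG * (lev lam : ℝ)) * |g lam| ^ pG ≤
        pR ^ pG * ((2 : ℝ) ^ (ES * (lev lam : ℝ)) * |u lam| ^ pS) := by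
    intro lam
    have hgabs : |g lam| ≤ pR * (2 : ℝ) ^ (AR * (lev lam : ℝ)) * |u lam| ^ (pR - 1) := by
      rw [hg lam, abs_mul, abs_mul, abs_mul]
      have h2 : |(2 : ℝ) ^ (AR * (lev lam : ℝ))| = (2 : ℝ) ^ (AR * (lev lam : ℝ)) :=
        abs_of_pos (Real.rpow_pos_of_pos two_pos _)
      have h3 : |Real.sign (u lam)| ≤ 1 := by
        rcases Real.sign_apply_eq (u lam) with h | h | h <;> rw [h] <;> norm_num
      have h4 : abs (|u lam| ^ (pR - 1)) = |u lam| ^ (pR - 1) :=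
        abs_of_nonneg (Real.rpow_nonneg (abs_nonneg _) _)
      rw [abs_of_pos hpR0, h2, h4]
      calc pR * (2:ℝ) ^ (AR * (lev lam : ℝ)) * |Real.sign (u lam)| * (|u lam| ^ (pR - 1))
          ≤ pR * (2:ℝ) ^ (AR * (lev lam : ℝ)) * 1 * (|u lam| ^ (pR - 1)) := by
            apply mul_le_mul_of_nonneg_right _ (Real.rpow_nonneg (abs_nonneg _) _)
            apply mul_le_mul_of_nonneg_left h3 (by positivity)
        _ = pR * (2:ℝ) ^ (AR * (lev lam : ℝ)) * |u lam| ^ (pR - 1) := by ring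
    have hbig : |g lam| ^ pG ≤
        pR ^ pG * (2 : ℝ) ^ (AR * (lev lam : ℝ) * pG) * |u lam| ^ pS := by
      have := Real.rpow_le_rpow (abs_nonneg _) hgabs hpG.le
      calc |g lam| ^ pG
          ≤ (pR * (2:ℝ) ^ (AR * (lev lam : ℝ)) * |u lam| ^ (pR - 1)) ^ pG := this
        _ = pR ^ pG * (2 : ℝ) ^ (AR * (lev lam : ℝ) * pG) * |u lam| ^ pS := by
            rw [Real.mul_rpow (by positivity) (Real.rpow_nonneg (abs_nonneg _) _),
              Real.mul_rpow hpR0.le (by positivity)]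
            rw [← Real.rpow_mul (by norm_num : (0:ℝ) ≤ 2),
              ← Real.rpow_mul (abs_nonneg _), hcomp]
    calc (2 : ℝ) ^ (EG * (lev lam : ℝ)) * |g lam| ^ pG
        ≤ (2 : ℝ) ^ (EG * (lev lam : ℝ)) *
            (pR ^ pG * (2 : ℝ) ^ (AR * (lev lam : ℝ) * pG) * |u lam| ^ pS) := by
          apply mul_le_mul_of_nonneg_left hbig (by positivity)
      _ = pR ^ pG * ((2 : ℝ) ^ ((EG + AR * pG) * (lev lam : ℝ)) * |u lam| ^ pS) := by
          have h2 : (2:ℝ) ^ (EG * (lev lam : ℝ)) * (2:ℝ) ^ (AR * (lev lam : ℝ) * pG)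
              = (2:ℝ) ^ ((EG + AR * pG) * (lev lam : ℝ)) := by
            rw [← Real.rpow_add two_pos]; ring_nf
          rw [← h2]; ring
      _ ≤ pR ^ pG * ((2 : ℝ) ^ (ES * (lev lam : ℝ)) * |u lam| ^ pS) := by
          apply mul_le_mul_of_nonneg_left _ (by positivity)
          apply mul_le_mul_of_nonneg_right _ (by positivity)
          apply Real.rpow_le_rpow_of_exponent_le (by norm_num)
          exact mul_le_mul_of_nonneg_right hkey (Nat.cast_nonneg _)
  set SG := ∑' lam : Λ, ENNReal.ofReal ((2 : ℝ) ^ (EG * (lev lam : ℝ)) * |g lam| ^ pG) with hSG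
  set SS := ∑' lam : Λ, ENNReal.ofReal ((2 : ℝ) ^ (ES * (lev lam : ℝ)) * |u lam| ^ pS) with hSS
  have hGpow : (besovNorm d lev sG pG g) ^ pG = SG := by
    rw [besovNorm, ← ENNReal.rpow_mul, one_div_mul_cancel hpG.ne', ENNReal.rpow_one]
  have hSpow : (besovNorm d lev sS pS u) ^ pS = SS := by
    rw [besovNorm, ← ENNReal.rpow_mul, one_div_mul_cancel hpS.ne', ENNReal.rpow_one]
  have hmain : SG ≤ ENNReal.ofReal (pR ^ pG) * SS := by
    rw [hSG, hSS, ← ENNReal.tsum_mul_left]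
    apply ENNReal.tsum_le_tsum
    intro lam
    rw [← ENNReal.ofReal_mul (by positivity)]
    exact ENNReal.ofReal_le_ofReal (hterm lam)
  have hSSfin : SS ≠ ⊤ := by
    rw [← hSpow]
    exact (ENNReal.rpow_lt_top_of_nonneg hpS.le hu).ne
  have hSGfin : SG ≠ ⊤ := by
    refine ne_top_of_le_ne_top ?_ hmain
    exact ENNReal.mul_ne_top ENNReal.ofReal_ne_top hSSfin
  constructor
  · rw [hGpow, hSpow]; exact hmain
  · have : besovNorm d lev sG pG g = SG ^ (1 / pG) := by rw [besovNorm]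
    rw [this]
    exact (ENNReal.rpow_lt_top_of_nonneg (by positivity) hSGfin).ne
end

section
/- Let 1 < p_R ≤ 2, s_R ∈ ℝ, and set τ := s_R + d(1/2 − 1/p_R). Let C, L > 0 and let u†, v : Λ → ℝ satisfy 2^{τ·ℓ(λ)}|u†_λ| < C and 2^{τ·ℓ(λ)}|v_λ − u†_λ| < L for every λ ∈ Λ. Then there exists a constant K = K(p_R, C, L) > 0 such that the Bregman distance of the penalty ‖·‖_{B^{s_R}_{p_R}}^{p_R} satisfies Σ_{λ∈Λ} 2^{p_R·τ·ℓ(λ)}·(|v_λ|^{p_R} − |u†_λ|^{p_R} − p_R·sign(u†_λ)·|u†_λ|^{p_R−1}·(v_λ − u†_λ)) ≥ K·Σ_{λ∈Λ} 2^{2τ·ℓ(λ)}·|v_λ − u†_λ|² = K·‖v − u†‖²_{H^τ}. -/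
open scoped ENNReal

lemma sign_mul_pos' {c a : ℝ} (hc : 0 < c) : Real.sign (c * a) = Real.sign a := by
  rcases lt_trichotomy a 0 with h | h | h
  · rw [Real.sign_of_neg h, Real.sign_of_neg (mul_neg_of_pos_of_neg hc h)]
  · simp [h]
  · rw [Real.sign_of_pos h, Real.sign_of_pos (mul_pos hc h)]

lemma sq_le_rpow' {p M x : ℝ} (hp1 : 1 < p) (hp2 : p ≤ 2) (hM : 0 < M) (hx : 0 ≤ x) (hxM : x ≤ M) :
    M ^ (p - 2) * x ^ 2 ≤ x ^ p := by
  rcases eq_or_lt_of_le hx with h | h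
  · simp [← h, Real.zero_rpow (by linarith : p ≠ 0)]
  · have h1 : x ^ p = x ^ (p - 2) * x ^ 2 := by
      rw [← Real.rpow_two, ← Real.rpow_add h]; ring_nf
    have h2 : M ^ (p - 2) ≤ x ^ (p - 2) :=
      Real.rpow_le_rpow_of_nonpos h hxM (by linarith)
    rw [h1]
    exact mul_le_mul_of_nonneg_right h2 (sq_nonneg x)

lemma hasDerivAt_F (p a K0 : ℝ) (hp : 1 ≤ p) (x : ℝ) :
    HasDerivAt (fun y : ℝ => y ^ p - p * a ^ (p - 1) * y - K0 * (y - a) ^ 2)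
      (p * x ^ (p - 1) - p * a ^ (p - 1) - K0 * (2 * (x - a))) x := by
  have h1 : HasDerivAt (fun y : ℝ => y ^ p) (p * x ^ (p - 1)) x :=
    Real.hasDerivAt_rpow_const (Or.inr hp)
  have h2 : HasDerivAt (fun y : ℝ => p * a ^ (p - 1) * y) (p * a ^ (p - 1)) x := by
    simpa using (hasDerivAt_id x).const_mul (p * a ^ (p - 1))
  have h3 : HasDerivAt (fun y : ℝ => (y - a) ^ 2) (2 * (x - a)) x := by
    simpa using ((hasDerivAt_id x).sub_const a).fun_pow 2
  exact (h1.sub h2).sub (h3.const_mul K0)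

lemma slope_lb {p M : ℝ} (hp1 : 1 < p) (hp2 : p ≤ 2) (hM : 0 < M) {x y : ℝ}
    (hx : x ∈ Set.Ioo (0 : ℝ) M) (hy : y ∈ Set.Ioo (0 : ℝ) M) (hxy : x ≤ y) :
    (p - 1) * M ^ (p - 2) * (y - x) ≤ y ^ (p - 1) - x ^ (p - 1) := by
  have hder : ∀ z ∈ Set.Ioo (0 : ℝ) M,
      HasDerivAt (fun y : ℝ => y ^ (p - 1)) ((p - 1) * z ^ (p - 2)) z := by
    intro z hz
    have := Real.hasDerivAt_rpow_const (x := z) (p := p - 1) (Or.inl hz.1.ne')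
    simpa [show p - 1 - 1 = p - 2 by ring] using this
  have hint : interior (Set.Ioo (0 : ℝ) M) = Set.Ioo (0 : ℝ) M := isOpen_Ioo.interior_eq
  refine (convex_Ioo (0 : ℝ) M).mul_sub_le_image_sub_of_le_deriv
    (fun z hz => (hder z hz).continuousAt.continuousWithinAt)
    (fun z hz => ((hder z (hint ▸ hz)).differentiableAt.differentiableWithinAt))
    (fun z hz => ?_) x hx y hy hxy
  rw [(hder z (hint ▸ hz)).deriv]
  have hz' : z ∈ Set.Ioo (0 : ℝ) M := hint ▸ hz
  have : M ^ (p - 2) ≤ z ^ (p - 2) :=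
    Real.rpow_le_rpow_of_nonpos hz'.1 hz'.2.le (by linarith)
  exact mul_le_mul_of_nonneg_left this (by linarith)

lemma key_pos {p M : ℝ} (hp1 : 1 < p) (hp2 : p ≤ 2) (hM : 0 < M) {a b : ℝ}
    (ha : a ∈ Set.Ioo (0 : ℝ) M) (hb : b ∈ Set.Ioo (0 : ℝ) M) :
    (p - 1) / 2 * M ^ (p - 2) * (b - a) ^ 2 ≤
      b ^ p - a ^ p - p * a ^ (p - 1) * (b - a) := by
  set K0 : ℝ := (p - 1) / 2 * M ^ (p - 2) with hK0
  set F : ℝ → ℝ := fun y => y ^ p - p * a ^ (p - 1) * y - K0 * (y - a) ^ 2 with hF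
  have hMp : (0 : ℝ) < M ^ (p - 2) := Real.rpow_pos_of_pos hM _
  have hFab : F a ≤ F b := by
    rcases le_total a b with hab | hab
    · refine monotoneOn_of_deriv_nonneg (convex_Icc a b)
        (fun z _ => (hasDerivAt_F p a K0 hp1.le z).continuousAt.continuousWithinAt)
        (fun z hz => (hasDerivAt_F p a K0 hp1.le z).differentiableAt.differentiableWithinAt)
        (fun z hz => ?_) (Set.left_mem_Icc.2 hab) (Set.right_mem_Icc.2 hab) hab
      rw [interior_Icc] at hz
      rw [(hasDerivAt_F p a K0 hp1.le z).deriv]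
      have hzI : z ∈ Set.Ioo (0 : ℝ) M := ⟨lt_trans ha.1 hz.1, lt_trans hz.2 hb.2⟩
      have hs := slope_lb hp1 hp2 hM ha hzI hz.1.le
      have hza : 0 ≤ z - a := by linarith [hz.1]
      nlinarith [mul_le_mul_of_nonneg_left hs (by linarith : (0:ℝ) ≤ p - 1),
        mul_nonneg (mul_nonneg (by linarith : (0:ℝ) ≤ p - 1) hMp.le) hza]
    · have := antitoneOn_of_deriv_nonpos (convex_Icc b a)
        (fun z _ => (hasDerivAt_F p a K0 hp1.le z).continuousAt.continuousWithinAt)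
        (fun z hz => (hasDerivAt_F p a K0 hp1.le z).differentiableAt.differentiableWithinAt)
        (fun z hz => ?_) (Set.left_mem_Icc.2 hab) (Set.right_mem_Icc.2 hab) hab
      · exact this
      rw [interior_Icc] at hz
      rw [(hasDerivAt_F p a K0 hp1.le z).deriv]
      have hzI : z ∈ Set.Ioo (0 : ℝ) M := ⟨lt_trans hb.1 hz.1, lt_trans hz.2 ha.2⟩
      have hs := slope_lb hp1 hp2 hM hzI ha hz.2.le
      have hza : 0 ≤ a - z := by linarith [hz.2]
      nlinarith [mul_le_mul_of_nonneg_left hs (by linarith : (0:ℝ) ≤ p - 1),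
        mul_nonneg (mul_nonneg (by linarith : (0:ℝ) ≤ p - 1) hMp.le) hza]
  have hFa : F a = a ^ p - p * a ^ (p - 1) * a := by simp [hF]
  have hFb : F b = b ^ p - p * a ^ (p - 1) * b - K0 * (b - a) ^ 2 := rfl
  rw [hFa, hFb] at hFab
  nlinarith [hFab]

lemma key_nonneg {p M : ℝ} (hp1 : 1 < p) (hp2 : p ≤ 2) (hM : 0 < M) {a b : ℝ}
    (ha0 : 0 ≤ a) (haM : a < M) (hbM : |b| < M) :
    (p - 1) / 2 * M ^ (p - 2) * (b - a) ^ 2 ≤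
      |b| ^ p - |a| ^ p - p * Real.sign a * |a| ^ (p - 1) * (b - a) := by
  have hMp : (0 : ℝ) < M ^ (p - 2) := Real.rpow_pos_of_pos hM _
  rcases eq_or_lt_of_le ha0 with h0 | hpos
  · -- a = 0
    rw [← h0, Real.sign_zero, abs_zero, Real.zero_rpow (by linarith : p ≠ 0)]
    have h1 := sq_le_rpow' hp1 hp2 hM (abs_nonneg b) hbM.le
    rw [sq_abs] at h1
    nlinarith [mul_nonneg (by linarith : (0:ℝ) ≤ 3 - p) (mul_nonneg hMp.le (sq_nonneg b))]
  · rw [Real.sign_of_pos hpos, abs_of_pos hpos]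
    rcases lt_or_ge 0 b with hb | hb
    · -- both positive
      have := key_pos hp1 hp2 hM ⟨hpos, haM⟩ ⟨hb, (abs_of_pos hb ▸ hbM)⟩
      rw [abs_of_pos hb]
      nlinarith [this]
    · -- b ≤ 0 < a
      rw [abs_of_nonpos hb]
      have hap : a ^ (p - 1) * a = a ^ p := by
        rw [← Real.rpow_add_one (ne_of_gt hpos) (p - 1)]; norm_num
      have h1 := sq_le_rpow' hp1 hp2 hM ha0 haM.le
      have h2 := sq_le_rpow' hp1 hp2 hM (neg_nonneg.2 hb) (by rw [← abs_of_nonpos hb]; exact hbM.le)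
      have h3 : 0 ≤ p * a ^ (p - 1) * (-b) :=
        mul_nonneg (mul_nonneg (by linarith) (Real.rpow_nonneg ha0 _)) (neg_nonneg.2 hb)
      have h4 : 0 ≤ (-b) ^ p := Real.rpow_nonneg (neg_nonneg.2 hb) _
      nlinarith [sq_nonneg (a + b), mul_le_mul_of_nonneg_left h1 (by linarith : (0:ℝ) ≤ p - 1),
        mul_le_mul_of_nonneg_left h2 (by linarith : (0:ℝ) ≤ p - 1),
        mul_le_mul_of_nonneg_left h4 (by linarith : (0:ℝ) ≤ 2 - p),
        mul_nonneg hMp.le (sq_nonneg (a + b))]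

lemma key_ineq {p M : ℝ} (hp1 : 1 < p) (hp2 : p ≤ 2) (hM : 0 < M) {a b : ℝ}
    (haM : |a| < M) (hbM : |b| < M) :
    (p - 1) / 2 * M ^ (p - 2) * (b - a) ^ 2 ≤
      |b| ^ p - |a| ^ p - p * Real.sign a * |a| ^ (p - 1) * (b - a) := by
  rcases le_or_gt 0 a with h | h
  · exact key_nonneg hp1 hp2 hM h (by rwa [← abs_of_nonneg h]) hbM
  · have := key_nonneg hp1 hp2 hM (a := -a) (b := -b) (by linarith)
      (by rwa [← abs_of_pos (by linarith : 0 < -a), abs_neg])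
      (by rwa [abs_neg])
    rw [abs_neg, abs_neg, Real.sign_neg] at this
    nlinarith [this]

lemma pointwise_ineq {p τ C L : ℝ} (hp1 : 1 < p) (hp2 : p ≤ 2) (hC : 0 < C) (hL : 0 < L)
    (t a b : ℝ)
    (ha : (2 : ℝ) ^ (τ * t) * |a| < C) (hb : (2 : ℝ) ^ (τ * t) * |b - a| < L) :
    (p - 1) / 2 * (C + L) ^ (p - 2) * ((2 : ℝ) ^ (2 * τ * t) * (b - a) ^ 2) ≤
      (2 : ℝ) ^ (p * τ * t) *
        (|b| ^ p - |a| ^ p - p * Real.sign a * |a| ^ (p - 1) * (b - a)) := by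
  set c : ℝ := (2 : ℝ) ^ (τ * t) with hcdef
  have hc : 0 < c := Real.rpow_pos_of_pos two_pos _
  have hM : 0 < C + L := by linarith
  have hA : |c * a| < C + L := by rw [abs_mul, abs_of_pos hc]; linarith
  have hB : |c * b| < C + L := by
    have h1 : |c * b| ≤ |c * a| + |c * b - c * a| := by
      have := abs_add_le (c * a) (c * b - c * a); simpa using this
    have h2 : |c * b - c * a| = c * |b - a| := by
      rw [← mul_sub, abs_mul, abs_of_pos hc]
    rw [h2, abs_mul c a, abs_mul c b, abs_of_pos hc] at h1
    rw [abs_mul, abs_of_pos hc]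
    linarith
  have hk := key_ineq hp1 hp2 hM hA hB
  have hc2 : c ^ 2 = (2 : ℝ) ^ (2 * τ * t) := by
    rw [sq, hcdef, ← Real.rpow_add two_pos]; ring_nf
  have hcp : c ^ p = (2 : ℝ) ^ (p * τ * t) := by
    rw [hcdef, ← Real.rpow_mul (by norm_num : (0:ℝ) ≤ 2)]; ring_nf
  have hcp1 : c ^ (p - 1) * c = c ^ p := by
    rw [← Real.rpow_add_one hc.ne' (p - 1)]; norm_num
  rw [← hc2, ← hcp]
  simp only [abs_mul, abs_of_pos hc, sign_mul_pos' hc] at hk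
  rw [Real.mul_rpow hc.le (abs_nonneg b), Real.mul_rpow hc.le (abs_nonneg a),
    Real.mul_rpow hc.le (abs_nonneg a)] at hk
  calc (p - 1) / 2 * (C + L) ^ (p - 2) * (c ^ 2 * (b - a) ^ 2)
      = (p - 1) / 2 * (C + L) ^ (p - 2) * (c * b - c * a) ^ 2 := by ring
    _ ≤ c ^ p * |b| ^ p - c ^ p * |a| ^ p -
        p * Real.sign a * (c ^ (p - 1) * |a| ^ (p - 1)) * (c * b - c * a) := hk
    _ = c ^ p * (|b| ^ p - |a| ^ p - p * Real.sign a * |a| ^ (p - 1) * (b - a)) := by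
        linear_combination (p * Real.sign a * |a| ^ (p - 1) * (a - b)) * hcp1

/-- Bregman-distance lower bound: if `1 < p_R ≤ 2`, `τ = s_R + d(1/2 − 1/p_R)`, and the scaled
coordinates satisfy `2^{τℓ(λ)}|u†_λ| < C` and `2^{τℓ(λ)}|v_λ − u†_λ| < L`, then there is
`K = K(p_R, C, L) > 0` with
`∑_λ 2^{p_R τ ℓ(λ)}(|v_λ|^{p_R} − |u†_λ|^{p_R} − p_R sign(u†_λ)|u†_λ|^{p_R−1}(v_λ − u†_λ))
  ≥ K ∑_λ 2^{2τℓ(λ)}|v_λ − u†_λ|² = K‖v − u†‖²_{H^τ}`. -/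
theorem bregman_lower_bound {Λ : Type*} [Countable Λ] (d : ℝ) (lev : Λ → ℕ)
    (sR pR : ℝ) (hd : 0 < d) (hpR1 : 1 < pR) (hpR2 : pR ≤ 2)
    (τ : ℝ) (hτ : τ = sR + d * (1 / 2 - 1 / pR))
    (C L : ℝ) (hC : 0 < C) (hL : 0 < L)
    (udag v : Λ → ℝ)
    (hbound : ∀ lam : Λ, (2 : ℝ) ^ (τ * (lev lam : ℝ)) * |udag lam| < C)
    (hdiff : ∀ lam : Λ, (2 : ℝ) ^ (τ * (lev lam : ℝ)) * |v lam - udag lam| < L) :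
    ∃ K : ℝ, 0 < K ∧
      ENNReal.ofReal K *
          (∑' lam : Λ, ENNReal.ofReal
            ((2 : ℝ) ^ (2 * τ * (lev lam : ℝ)) * (v lam - udag lam) ^ 2)) ≤
        ∑' lam : Λ, ENNReal.ofReal
          ((2 : ℝ) ^ (pR * τ * (lev lam : ℝ)) *
            (|v lam| ^ pR - |udag lam| ^ pR -
              pR * Real.sign (udag lam) * |udag lam| ^ (pR - 1) * (v lam - udag lam))) ∧
      (∑' lam : Λ, ENNReal.ofReal
          ((2 : ℝ) ^ (2 * τ * (lev lam : ℝ)) * (v lam - udag lam) ^ 2)) =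
        (besovNorm d lev τ 2 (fun lam => v lam - udag lam)) ^ (2 : ℝ) := by
  set K : ℝ := (pR - 1) / 2 * (C + L) ^ (pR - 2) with hK
  have hK0 : 0 < K :=
    mul_pos (by linarith) (Real.rpow_pos_of_pos (by linarith) _)
  refine ⟨K, hK0, ?_, ?_⟩
  · calc ENNReal.ofReal K *
          ∑' lam : Λ, ENNReal.ofReal
            ((2 : ℝ) ^ (2 * τ * (lev lam : ℝ)) * (v lam - udag lam) ^ 2)
        = ∑' lam : Λ, ENNReal.ofReal K *
            ENNReal.ofReal ((2 : ℝ) ^ (2 * τ * (lev lam : ℝ)) * (v lam - udag lam) ^ 2) :=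
          ENNReal.tsum_mul_left.symm
      _ = ∑' lam : Λ, ENNReal.ofReal
            (K * ((2 : ℝ) ^ (2 * τ * (lev lam : ℝ)) * (v lam - udag lam) ^ 2)) :=
          tsum_congr fun lam => (ENNReal.ofReal_mul hK0.le).symm
      _ ≤ _ := ENNReal.tsum_le_tsum fun lam => ENNReal.ofReal_le_ofReal
          (pointwise_ineq hpR1 hpR2 hC hL (lev lam : ℝ) (udag lam) (v lam)
            (hbound lam) (hdiff lam))
  · rw [besovNorm, ← ENNReal.rpow_mul]
    norm_num
end
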